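/- Let G = (V, E) be a finite directed acyclic graph. Then every equivalence class of the orbit equivalence relation induced by the automorphism group Aut(G) on V is an independent subset of V. -/

import Mathlib

/-- Reachability: there is a nonempty directed path from `u` to `v`. -/
def Reach {V : Type*} (E : V → V → Prop) : V → V → Prop := Relation.TransGen E

/-- Two vertices are independent if neither reaches the other. -/
def Indep {V : Type*} (E : V → V → Prop) (u v : V) : Prop :=
  ¬ Reach E u v ∧ ¬ Reach E v u

/-- `[v]_⊥ = {u : u ⊥ v} ∪ {v}`. -/
def PerpClass {V : Type*} (E : V → V → Prop) (v : V) : Set V :=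
  {u | Indep E u v} ∪ {v}

/-- A set of vertices is independent if its elements are pairwise independent. -/
def IndepSet {V : Type*} (E : V → V → Prop) (I : Set V) : Prop :=
  ∀ u ∈ I, ∀ v ∈ I, u ≠ v → Indep E u v

/-- A permutation of the vertices is an automorphism of `G` if it preserves the
edge relation in both directions. -/
def IsAut {V : Type*} (E : V → V → Prop) (π : Equiv.Perm V) : Prop :=
  ∀ u v : V, E u v ↔ E (π u) (π v)

/-- The orbit equivalence relation induced by `Aut(G)`: `u` and `v` are related
exactly when some automorphism maps `u` to `v`. -/
def OrbRel {V : Type*} (E : V → V → Prop) (u v : V) : Prop :=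
  ∃ π : Equiv.Perm V, IsAut E π ∧ π u = v

/-- in a finite DAG, every orbit of the automorphism group is an
independent set of vertices. -/
lemma reach_map {V : Type*} {E : V → V → Prop} {π : Equiv.Perm V} (hπ : IsAut E π)
    {a b : V} (h : Reach E a b) : Reach E (π a) (π b) := by
  induction h with
  | single h => exact Relation.TransGen.single ((hπ _ _).mp h)
  | tail _ h ih => exact Relation.TransGen.tail ih ((hπ _ _).mp h)

lemma isAut_inv {V : Type*} {E : V → V → Prop} {π : Equiv.Perm V} (hπ : IsAut E π) :
    IsAut E π⁻¹ := by
  intro a b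
  have := hπ (π⁻¹ a) (π⁻¹ b)
  simp only [Equiv.Perm.coe_inv, Equiv.apply_symm_apply] at this
  exact this.symm

lemma isAut_mul {V : Type*} {E : V → V → Prop} {π σ : Equiv.Perm V}
    (hπ : IsAut E π) (hσ : IsAut E σ) : IsAut E (π * σ) := by
  intro a b
  exact (hσ a b).trans (hπ (σ a) (σ b))

lemma isAut_pow {V : Type*} {E : V → V → Prop} {π : Equiv.Perm V} (hπ : IsAut E π) :
    ∀ n : ℕ, IsAut E (π ^ n)
  | 0 => by intro a b; simp
  | n + 1 => by
      rw [pow_succ]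
      exact isAut_mul (isAut_pow hπ n) hπ

theorem stmt_7 {V : Type*} [Finite V] (E : V → V → Prop)
    (hdag : ∀ v : V, ¬ Reach E v v) (v : V) :
    IndepSet E {u | OrbRel E v u} := by
  intro u hu w hw huw
  obtain ⟨π, hπ, hπv⟩ := hu
  obtain ⟨σ, hσ, hσv⟩ := hw
  have key : ∀ (τ : Equiv.Perm V), IsAut E τ → ∀ x : V, ¬ Reach E x (τ x) := by
    intro τ hτ x hx
    have hiter : ∀ k : ℕ, Reach E x ((τ ^ (k + 1)) x) := by
      intro k
      induction k with
      | zero => simpa using hx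
      | succ k ih =>
          have h2 : Reach E ((τ ^ (k + 1)) x) ((τ ^ (k + 1)) (τ x)) :=
            reach_map (isAut_pow hτ (k + 1)) hx
          have : (τ ^ (k + 1)) (τ x) = (τ ^ (k + 1 + 1)) x := by
            rw [pow_succ]; rfl
          rw [this] at h2
          exact ih.trans h2
    have hord : 0 < orderOf τ := orderOf_pos τ
    have := hiter (orderOf τ - 1)
    rw [Nat.sub_add_cancel hord, pow_orderOf_eq_one] at this
    exact hdag x (by simpa using this)
  constructor
  · intro h
    have heq : (σ * π⁻¹) u = w := by
      simp [← hπv, ← hσv, Equiv.Perm.mul_apply]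
    have h2 : Reach E u ((σ * π⁻¹) u) := heq ▸ h
    exact key _ (isAut_mul hσ (isAut_inv hπ)) u h2
  · intro h
    have heq : (π * σ⁻¹) w = u := by
      simp [← hπv, ← hσv, Equiv.Perm.mul_apply]
    have h2 : Reach E w ((π * σ⁻¹) w) := heq ▸ h
    exact key _ (isAut_mul hπ (isAut_inv hσ)) w h2
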